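/- arXiv:2507.02492 — 4 statements merged into one kernel-verified Lean document; each statement's English description precedes it below -/
import Mathlib

section
/- Let n ≥ 1, k ≥ 1, and let A_1, …, A_k be a system of k mutually unbiased orthonormal bases of ℂ^n with a_{iq}^{(l)} = b_{iq}^{(l)} + i·c_{iq}^{(l)} as above. Let M be the ideal of the real polynomial ring ℝ[x_{ij}, y_{ij} : 1 ≤ i, j ≤ n] generated by the polynomials Σ_{i=1}^n (x_{ij}x_{ik} + y_{ij}y_{ik}) and Σ_{i=1}^n (x_{ik}y_{ij} − x_{ij}y_{ik}) for 1 ≤ j ≠ k ≤ n, together with (Σ_{i=1}^n (x_{ij}b_{iq}^{(l)} + y_{ij}c_{iq}^{(l)}))^2 + (Σ_{i=1}^n (b_{iq}^{(l)}y_{ij} − x_{ij}c_{iq}^{(l)}))^2 − 1/n for 1 ≤ j, q ≤ n and 1 ≤ l ≤ k. If M is the unit ideal (equivalently 1 ∈ M), then there is no orthonormal basis A_{k+1} of ℂ^n making A_1, …, A_k, A_{k+1} a system of k+1 MUBs. -/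
open scoped BigOperators ComplexConjugate

/-- `A` is an orthonormal basis of `ℂ^n`, where `A j` is the `j`-th vector. -/
def IsONB (n : ℕ) (A : Fin n → Fin n → ℂ) : Prop :=
  ∀ j k : Fin n, (∑ i, A j i * conj (A k i)) = if j = k then 1 else 0

/-- Two orthonormal bases of `ℂ^n` are mutually unbiased. -/
def IsMUBPair (n : ℕ) (A B : Fin n → Fin n → ℂ) : Prop :=
  ∀ j k : Fin n, ‖∑ i, A j i * conj (B k i)‖ = 1 / Real.sqrt n

/-- The polynomial ring `ℝ[x_{ij}, y_{ij} : 1 ≤ i, j ≤ n]`: the left summand indexes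
the `x` variables and the right summand the `y` variables. -/
abbrev MUBPolyRing (n : ℕ) := MvPolynomial ((Fin n × Fin n) ⊕ (Fin n × Fin n)) ℝ

noncomputable def Xv {n : ℕ} (i j : Fin n) : MUBPolyRing n :=
  MvPolynomial.X (Sum.inl (i, j))

noncomputable def Yv {n : ℕ} (i j : Fin n) : MUBPolyRing n :=
  MvPolynomial.X (Sum.inr (i, j))

/-- The generators of the ideal `M` determining the extendability of a system of MUBs. -/
def MUBIdealGens (n k : ℕ) (b c : Fin k → Fin n → Fin n → ℝ) : Set (MUBPolyRing n) :=
  {p | (∃ j k' : Fin n, j ≠ k' ∧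
          p = ∑ i, (Xv i j * Xv i k' + Yv i j * Yv i k')) ∨
       (∃ j k' : Fin n, j ≠ k' ∧
          p = ∑ i, (Xv i k' * Yv i j - Xv i j * Yv i k')) ∨
       (∃ (l : Fin k) (j q : Fin n),
          p = (∑ i, (Xv i j * MvPolynomial.C (b l i q) + Yv i j * MvPolynomial.C (c l i q))) ^ 2
              + (∑ i, (MvPolynomial.C (b l i q) * Yv i j - Xv i j * MvPolynomial.C (c l i q))) ^ 2
              - MvPolynomial.C ((1 : ℝ) / n))}

theorem not_extendable_of_unit_ideal (n k : ℕ) (hn : 1 ≤ n) (hk : 1 ≤ k)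
    (A : Fin k → Fin n → Fin n → ℂ)
    (b c : Fin k → Fin n → Fin n → ℝ)
    (hA : ∀ (l : Fin k) (q i : Fin n),
      A l q i = (b l i q : ℂ) + Complex.I * (c l i q : ℂ))
    (hONB : ∀ l, IsONB n (A l))
    (hMUB : ∀ l l', l ≠ l' → IsMUBPair n (A l) (A l'))
    (hunit : Ideal.span (MUBIdealGens n k b c) = ⊤) :
    ¬ ∃ A' : Fin n → Fin n → ℂ, IsONB n A' ∧ ∀ l, IsMUBPair n (A l) A' := by
  rintro ⟨A', hONB', hMUB'⟩
  -- evaluate polynomials at the coordinates of A'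
  set v : (Fin n × Fin n) ⊕ (Fin n × Fin n) → ℝ :=
    Sum.elim (fun p => (A' p.2 p.1).re) (fun p => (A' p.2 p.1).im) with hv
  set φ : MUBPolyRing n →ₐ[ℝ] ℝ := MvPolynomial.aeval v with hφ
  have hgen : ∀ p ∈ MUBIdealGens n k b c, φ p = 0 := by
    rintro p (⟨j, k', hjk, rfl⟩ | ⟨j, k', hjk, rfl⟩ | ⟨l, j, q, rfl⟩)
    · have h := hONB' j k'
      rw [if_neg hjk] at h
      have h0 : (∑ i, A' j i * conj (A' k' i)).re = 0 := by rw [h]; simp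
      rw [Complex.re_sum] at h0
      simp only [map_sum, map_add, map_mul, Xv, Yv, hφ, MvPolynomial.aeval_X, hv,
        Sum.elim_inl, Sum.elim_inr]
      rw [← h0]
      congr 1; funext i
      simp only [Complex.mul_re, Complex.conj_re, Complex.conj_im]
      ring
    · have h := hONB' j k'
      rw [if_neg hjk] at h
      have h0 : (∑ i, A' j i * conj (A' k' i)).im = 0 := by rw [h]; simp
      rw [Complex.im_sum] at h0
      simp only [map_sum, map_sub, map_mul, Xv, Yv, hφ, MvPolynomial.aeval_X, hv,
        Sum.elim_inl, Sum.elim_inr]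
      rw [← h0]
      congr 1; funext i
      simp only [Complex.mul_im, Complex.conj_re, Complex.conj_im]
      ring
    · have h := hMUB' l q j
      set z : ℂ := ∑ i, A l q i * conj (A' j i) with hz
      have hzre : z.re = ∑ i, ((A' j i).re * b l i q + (A' j i).im * c l i q) := by
        rw [hz, Complex.re_sum]
        congr 1; funext i
        rw [hA l q i]
        simp [Complex.mul_re, Complex.conj_re, Complex.conj_im]
        ring
      have hzim : z.im = -∑ i, (b l i q * (A' j i).im - (A' j i).re * c l i q) := by
        rw [hz, Complex.im_sum, ← Finset.sum_neg_distrib]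
        congr 1; funext i
        rw [hA l q i]
        simp [Complex.mul_im, Complex.conj_re, Complex.conj_im]
        ring
      have hnormsq : z.re ^ 2 + z.im ^ 2 = 1 / n := by
        have habs : ‖z‖ = 1 / Real.sqrt n := h
        have hn0 : (0:ℝ) < n := by exact_mod_cast hn
        have : (‖z‖) ^ 2 = (1 / Real.sqrt n) ^ 2 := by rw [habs]
        rw [Complex.sq_norm, Complex.normSq_apply] at this
        rw [div_pow, one_pow, Real.sq_sqrt hn0.le] at this
        rw [pow_two, pow_two]; exact this
      simp only [map_sub, map_add, map_pow, map_sum, map_mul, Xv, Yv, hφ,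
        MvPolynomial.aeval_X, MvPolynomial.aeval_C, hv, Sum.elim_inl, Sum.elim_inr,
        Algebra.algebraMap_self, RingHom.id_apply]
      rw [← hzre]
      have : (∑ i, (b l i q * (A' j i).im - (A' j i).re * c l i q)) ^ 2 = z.im ^ 2 := by
        rw [hzim]; ring
      rw [this, hnormsq]
      ring
  have hker : Ideal.span (MUBIdealGens n k b c) ≤ RingHom.ker φ.toRingHom := by
    rw [Ideal.span_le]
    intro p hp
    exact hgen p hp
  rw [hunit] at hker
  have h1 : φ 1 = 0 := hker (Submodule.mem_top (x := (1 : MUBPolyRing n)))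
  simp at h1
end

section
/- Let E = {(1,0), (0,1)} be the standard basis of ℂ², B_1 = {(1/√2)(1,1), (1/√2)(1,−1)}, and B_2 = {(1/√2)(1,i), (1/√2)(1,−i)}, so that {E, B_1, B_2} is a system of 3 MUBs in ℂ². Then there is no orthonormal basis B_3 of ℂ² that is mutually unbiased with each of E, B_1 and B_2; i.e., this system cannot be extended to a system of 4 MUBs. -/
open scoped BigOperators ComplexConjugate

/-- The standard basis of `ℂ²`. -/
def stdBasis : Fin 2 → Fin 2 → ℂ := fun j i => if i = j then 1 else 0

/-- The basis `B₁ = {(1/√2)(1,1), (1/√2)(1,−1)}` of `ℂ²`. -/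
noncomputable def B1 : Fin 2 → Fin 2 → ℂ :=
  ![![(Real.sqrt 2 : ℂ)⁻¹, (Real.sqrt 2 : ℂ)⁻¹],
    ![(Real.sqrt 2 : ℂ)⁻¹, -(Real.sqrt 2 : ℂ)⁻¹]]

/-- The basis `B₂ = {(1/√2)(1,i), (1/√2)(1,−i)}` of `ℂ²`. -/
noncomputable def B2 : Fin 2 → Fin 2 → ℂ :=
  ![![(Real.sqrt 2 : ℂ)⁻¹, (Real.sqrt 2 : ℂ)⁻¹ * Complex.I],
    ![(Real.sqrt 2 : ℂ)⁻¹, -((Real.sqrt 2 : ℂ)⁻¹ * Complex.I)]]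

theorem no_fourth_MUB_in_dim_two :
    ¬ ∃ b : Fin 2 → Fin 2 → ℂ, IsONB 2 b ∧
      IsMUBPair 2 stdBasis b ∧ IsMUBPair 2 B1 b ∧ IsMUBPair 2 B2 b := by
  rintro ⟨b, -, hstd, h1, h2⟩
  have sqh : ∀ z : ℂ, ‖z‖ = (Real.sqrt 2)⁻¹ → Complex.normSq z = 1/2 := by
    intro z hz
    have h2' : (Real.sqrt 2) ^ 2 = 2 := Real.sq_sqrt (by norm_num)
    have := congrArg (· ^ 2) hz
    simp only [Complex.sq_norm, inv_pow, h2'] at this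
    simpa using this
  have e0 := hstd 0 0
  have e1 := hstd 1 0
  have f0 := h1 0 0
  have g0 := h2 0 0
  simp only [IsMUBPair, Fin.sum_univ_two, stdBasis, B1, B2, Matrix.cons_val_zero,
    Matrix.cons_val_one, Matrix.head_cons, Nat.cast_ofNat] at e0 e1 f0 g0
  norm_num at e0 e1 f0 g0
  rw [show ((Real.sqrt 2:ℝ):ℂ)⁻¹ * conj (b 0 0) + ((Real.sqrt 2:ℝ):ℂ)⁻¹ * conj (b 0 1)
      = ((Real.sqrt 2:ℝ):ℂ)⁻¹ * (conj (b 0 0) + conj (b 0 1)) from by ring] at f0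
  rw [show ((Real.sqrt 2:ℝ):ℂ)⁻¹ * conj (b 0 0) + ((Real.sqrt 2:ℝ):ℂ)⁻¹ * Complex.I * conj (b 0 1)
      = ((Real.sqrt 2:ℝ):ℂ)⁻¹ * (conj (b 0 0) + Complex.I * conj (b 0 1)) from by ring] at g0
  replace e0 := sqh _ e0
  replace e1 := sqh _ e1
  replace f0 := sqh _ f0
  replace g0 := sqh _ g0
  have hss : Real.sqrt 2 * Real.sqrt 2 = 2 := Real.mul_self_sqrt (by norm_num)
  rw [Complex.normSq_mul, Complex.normSq_inv, Complex.normSq_ofReal, hss] at f0 g0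
  have f0' : Complex.normSq (conj (b 0 0) + conj (b 0 1)) = 1 := by
    field_simp at f0; linarith
  have g0' : Complex.normSq (conj (b 0 0) + Complex.I * conj (b 0 1)) = 1 := by
    field_simp at g0; linarith
  simp only [Complex.normSq_apply, Complex.add_re, Complex.add_im, Complex.mul_re,
    Complex.mul_im, Complex.conj_re, Complex.conj_im, Complex.I_re, Complex.I_im] at e0 e1 f0' g0'
  set xr := (b 0 0).re
  set xi := (b 0 0).im
  set yr := (b 0 1).re
  set yi := (b 0 1).im
  nlinarith [sq_nonneg (xr*yr + xi*yi), sq_nonneg (xr*yi - xi*yr), e0, e1, f0', g0']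
end

section
/- Let A_1, …, A_m be nonzero n×n complex matrices such that each A_i is normal, A_i A_j = A_j A_i for all i, j, and tr(A_i† A_j) = 0 for all i ≠ j (pairwise orthogonal with respect to the trace inner product). Then m ≤ n. -/
open scoped BigOperators
open LinearMap Module.End

section NormalOps

variable {E : Type*} [NormedAddCommGroup E] [InnerProductSpace ℂ E] [FiniteDimensional ℂ E]

local notation "⟪" x ", " y "⟫" => @inner ℂ _ _ x y

/-- For a normal operator, `‖N† v‖ = ‖N v‖`. -/
lemma norm_star_apply_of_normal (N : E →ₗ[ℂ] E) (hN : Commute N (star N)) (v : E) :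
    ‖star N v‖ = ‖N v‖ := by
  have h : ⟪star N v, star N v⟫ = ⟪N v, N v⟫ := by
    rw [star_eq_adjoint, adjoint_inner_left, ← Module.End.mul_apply, ← star_eq_adjoint,
      hN, Module.End.mul_apply, star_eq_adjoint, adjoint_inner_right]
  have h1 := inner_self_eq_norm_sq (𝕜 := ℂ) (star N v)
  have h2 := inner_self_eq_norm_sq (𝕜 := ℂ) (N v)
  rw [h, h2] at h1
  nlinarith [norm_nonneg (star N v), norm_nonneg (N v)]

lemma star_apply_eigen_of_normal (N : E →ₗ[ℂ] E) (hN : Commute N (star N)) (μ : ℂ) (v : E)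
    (hv : N v = μ • v) : star N v = (starRingEnd ℂ μ) • v := by
  set M : E →ₗ[ℂ] E := N - μ • 1 with hM
  have hMstar : star M = star N - (starRingEnd ℂ μ) • 1 := by
    simp [hM, star_sub, star_smul, Complex.star_def]
  have hMn : Commute M (star M) := by
    rw [hMstar]
    show (N - μ • 1) * (star N - (starRingEnd ℂ μ) • 1)
      = (star N - (starRingEnd ℂ μ) • 1) * (N - μ • 1)
    simp only [sub_mul, mul_sub, smul_mul_assoc, mul_smul_comm, one_mul, mul_one]
    rw [hN]
    module
  have hMv : M v = 0 := by
    simp [hM, hv, LinearMap.sub_apply]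
  have h0 : star M v = 0 := by
    have := norm_star_apply_of_normal M hMn v
    rw [hMv, norm_zero] at this
    exact norm_eq_zero.mp this
  rw [hMstar] at h0
  have : star N v - (starRingEnd ℂ μ) • v = 0 := by simpa using h0
  rw [sub_eq_zero] at this
  exact this

lemma reP_isSymmetric (N : E →ₗ[ℂ] E) : (((2:ℂ)⁻¹) • (N + star N)).IsSymmetric := by
  rw [LinearMap.isSymmetric_iff_isSelfAdjoint]
  rw [IsSelfAdjoint, star_smul, star_add, star_star]
  rw [show star ((2:ℂ)⁻¹) = (2:ℂ)⁻¹ by norm_num [Complex.star_def, Complex.ext_iff]]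
  rw [add_comm]

lemma imP_isSymmetric (N : E →ₗ[ℂ] E) : (((2*Complex.I : ℂ))⁻¹ • (N - star N)).IsSymmetric := by
  rw [LinearMap.isSymmetric_iff_isSelfAdjoint]
  rw [IsSelfAdjoint, star_smul, star_sub, star_star]
  rw [show star ((2 * Complex.I : ℂ))⁻¹ = -(2 * Complex.I)⁻¹ by
    rw [Complex.star_def, map_inv₀, map_mul, Complex.conj_I, map_ofNat]; ring]
  module

lemma reim_decomp (N : E →ₗ[ℂ] E) :
    N = ((2:ℂ)⁻¹) • (N + star N) + Complex.I • (((2*Complex.I : ℂ))⁻¹ • (N - star N)) := by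
  rw [smul_smul]
  match_scalars <;> field_simp <;> ring

lemma iSup_eigenspace_eq_top_of_normal (N : E →ₗ[ℂ] E) (hN : Commute N (star N)) :
    ⨆ μ : ℂ, Module.End.eigenspace N μ = ⊤ := by
  set H : E →ₗ[ℂ] E := (2 : ℂ)⁻¹ • (N + star N) with hH
  set K : E →ₗ[ℂ] E := (2 * Complex.I)⁻¹ • (N - star N) with hK
  have hHsym : H.IsSymmetric := reP_isSymmetric N
  have hKsym : K.IsSymmetric := imP_isSymmetric N
  have hHK : Commute H K := by
    rw [hH, hK]
    apply Commute.smul_left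
    apply Commute.smul_right
    show (N + star N) * (N - star N) = (N - star N) * (N + star N)
    simp only [add_mul, mul_add, sub_mul, mul_sub]
    rw [hN]
    module
  have hNHK : N = H + Complex.I • K := reim_decomp N
  let T : Fin 2 → (E →ₗ[ℂ] E) := fun i => if i = 0 then H else K
  have hT0 : T 0 = H := rfl
  have hT1 : T 1 = K := rfl
  have hTsym : ∀ i, (T i).IsSymmetric := by
    intro i
    fin_cases i
    · exact hHsym
    · exact hKsym
  have hTcomm : Pairwise (Function.onFun Commute T) := by
    intro i j hij
    fin_cases i <;> fin_cases j <;> simp only [Function.onFun]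
    · exact absurd rfl hij
    · exact hHK
    · exact hHK.symm
    · exact absurd rfl hij
  have htop := LinearMap.IsSymmetric.iSup_iInf_eq_top_of_commute hTsym hTcomm
  rw [← top_le_iff, ← htop]
  apply iSup_le
  intro χ
  apply le_iSup_of_le (χ 0 + Complex.I * χ 1)
  intro v hv
  rw [Submodule.mem_iInf] at hv
  have h0 := Module.End.mem_eigenspace_iff.mp (hv 0)
  have h1 := Module.End.mem_eigenspace_iff.mp (hv 1)
  rw [hT0] at h0
  rw [hT1] at h1
  rw [Module.End.mem_eigenspace_iff, hNHK]
  simp only [LinearMap.add_apply, LinearMap.smul_apply]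
  rw [h0, h1, smul_smul, ← add_smul]

lemma fuglede (N M : E →ₗ[ℂ] E) (hN : Commute N (star N)) (hMN : Commute M N) :
    Commute M (star N) := by
  have htop := iSup_eigenspace_eq_top_of_normal N hN
  have hker : ∀ μ : ℂ, Module.End.eigenspace N μ ≤ LinearMap.ker (M * star N - star N * M) := by
    intro μ v hv
    rw [Module.End.mem_eigenspace_iff] at hv
    have hMv : N (M v) = μ • (M v) := by
      rw [← Module.End.mul_apply, ← hMN, Module.End.mul_apply, hv, map_smul]
    rw [LinearMap.mem_ker, LinearMap.sub_apply, Module.End.mul_apply, Module.End.mul_apply,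
      star_apply_eigen_of_normal N hN μ v hv, star_apply_eigen_of_normal N hN μ (M v) hMv,
      map_smul, sub_self]
  have hle : (⊤ : Submodule ℂ E) ≤ LinearMap.ker (M * star N - star N * M) := by
    rw [← htop]; exact iSup_le hker
  have hzero : M * star N - star N * M = 0 := by
    ext v
    simpa using LinearMap.mem_ker.mp (hle (Submodule.mem_top : v ∈ ⊤))
  exact sub_eq_zero.mp hzero

end NormalOps

lemma trace_conjTranspose_mul_self_ne_zero {n : ℕ} (X : Matrix (Fin n) (Fin n) ℂ)
    (hX : X ≠ 0) : (X.conjTranspose * X).trace ≠ 0 := by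
  have htr : (X.conjTranspose * X).trace
      = ((∑ k : Fin n, ∑ l : Fin n, Complex.normSq (X l k) : ℝ) : ℂ) := by
    rw [Matrix.trace]
    push_cast
    apply Finset.sum_congr rfl
    intro k _
    rw [Matrix.diag_apply, Matrix.mul_apply]
    apply Finset.sum_congr rfl
    intro l _
    rw [Matrix.conjTranspose_apply]
    rw [Complex.normSq_eq_conj_mul_self, Complex.star_def]
  rw [htr]
  norm_cast
  intro h
  apply hX
  ext l k
  have h1 : ∀ k ∈ Finset.univ, ∀ l ∈ Finset.univ, (0:ℝ) ≤ Complex.normSq (X l k) := by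
    intro _ _ _ _; exact Complex.normSq_nonneg _
  have := (Finset.sum_eq_zero_iff_of_nonneg (fun k _ =>
    Finset.sum_nonneg (fun l _ => Complex.normSq_nonneg (X l k)))).mp h k (Finset.mem_univ k)
  have := (Finset.sum_eq_zero_iff_of_nonneg (fun l _ => Complex.normSq_nonneg (X l k))).mp
    this l (Finset.mem_univ l)
  simpa [Complex.normSq_eq_zero] using this

theorem max_orthogonal_commuting_normal (n m : ℕ)
    (A : Fin m → Matrix (Fin n) (Fin n) ℂ)
    (hne : ∀ i, A i ≠ 0)
    (hnormal : ∀ i, A i * (A i).conjTranspose = (A i).conjTranspose * A i)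
    (hcomm : ∀ i j, A i * A j = A j * A i)
    (horth : ∀ i j, i ≠ j → ((A i).conjTranspose * A j).trace = 0) :
    m ≤ n := by
  classical
  let E := EuclideanSpace ℂ (Fin n)
  let T : Fin m → (E →ₗ[ℂ] E) := fun i => Matrix.toEuclideanLin (A i)
  have hmulT : ∀ X Y : Matrix (Fin n) (Fin n) ℂ,
      Matrix.toEuclideanLin (X * Y) = Matrix.toEuclideanLin X * Matrix.toEuclideanLin Y := by
    intro X Y
    apply LinearMap.ext
    intro v
    simp [Matrix.toEuclideanLin_apply, Matrix.mulVec_mulVec, Module.End.mul_apply]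
  have hstarT : ∀ X : Matrix (Fin n) (Fin n) ℂ,
      Matrix.toEuclideanLin X.conjTranspose = star (Matrix.toEuclideanLin X) := by
    intro X
    rw [Matrix.toEuclideanLin_conjTranspose_eq_adjoint, LinearMap.star_eq_adjoint]
  have hTnormal : ∀ i, Commute (T i) (star (T i)) := by
    intro i
    show T i * star (T i) = star (T i) * T i
    rw [← hstarT, ← hmulT, ← hmulT, hnormal i]
  have hTcomm : ∀ i j, Commute (T i) (T j) := by
    intro i j
    show T i * T j = T j * T i
    rw [← hmulT, ← hmulT, hcomm]
  have key : ∀ i j, Commute (T i) (star (T j)) := fun i j =>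
    fuglede (T j) (T i) (hTnormal j) (hTcomm i j)
  have key2 : ∀ i j, Commute (star (T i)) (star (T j)) := fun i j => (hTcomm i j).star_star
  -- the family of real and imaginary parts
  let S : (Fin m ⊕ Fin m) → (E →ₗ[ℂ] E) :=
    Sum.elim (fun i => ((2:ℂ)⁻¹) • (T i + star (T i)))
      (fun i => ((2*Complex.I : ℂ))⁻¹ • (T i - star (T i)))
  have hSsym : ∀ k, (S k).IsSymmetric := by
    intro k
    rcases k with i | i
    · exact reP_isSymmetric (T i)
    · exact imP_isSymmetric (T i)
  have hSpair : Pairwise (Function.onFun Commute S) := by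
    have base : ∀ i j, Commute (T i + star (T i)) (T j + star (T j)) := fun i j =>
      ((hTcomm i j).add_right (key i j)).add_left (((key j i).symm).add_right (key2 i j))
    have base2 : ∀ i j, Commute (T i + star (T i)) (T j - star (T j)) := fun i j =>
      ((hTcomm i j).sub_right (key i j)).add_left (((key j i).symm).sub_right (key2 i j))
    have base3 : ∀ i j, Commute (T i - star (T i)) (T j - star (T j)) := fun i j =>
      ((hTcomm i j).sub_right (key i j)).sub_left (((key j i).symm).sub_right (key2 i j))
    intro x y _
    rcases x with i | i <;> rcases y with j | j <;> simp only [Function.onFun, S, Sum.elim_inl,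
      Sum.elim_inr]
    · exact ((base i j).smul_left _).smul_right _
    · exact ((base2 i j).smul_left _).smul_right _
    · exact (((base2 j i).symm).smul_left _).smul_right _
    · exact ((base3 i j).smul_left _).smul_right _
  have htop := LinearMap.IsSymmetric.iSup_iInf_eq_top_of_commute hSsym hSpair
  set W : ((Fin m ⊕ Fin m) → ℂ) → Submodule ℂ E :=
    fun χ => ⨅ k, Module.End.eigenspace (S k) (χ k) with hW
  have hWind : iSupIndep W :=
    (LinearMap.IsSymmetric.orthogonalFamily_iInf_eigenspaces hSsym).independent
  haveI : FiniteDimensional ℂ E := by infer_instance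
  haveI hfin : Fintype {χ // W χ ≠ ⊥} := hWind.fintypeNeBotOfFiniteDimensional
  have hcard : Fintype.card {χ // W χ ≠ ⊥} ≤ Module.finrank ℂ E :=
    hWind.subtype_ne_bot_le_finrank
  -- each T i acts as a scalar on each W χ
  have hdecomp : ∀ i, T i = S (Sum.inl i) + Complex.I • S (Sum.inr i) := fun i =>
    reim_decomp (T i)
  have heig : ∀ χ, ∀ i, ∀ v ∈ W χ, T i v = (χ (Sum.inl i) + Complex.I * χ (Sum.inr i)) • v := by
    intro χ i v hv
    rw [hW] at hv
    rw [Submodule.mem_iInf] at hv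
    have h1 := Module.End.mem_eigenspace_iff.mp (hv (Sum.inl i))
    have h2 := Module.End.mem_eigenspace_iff.mp (hv (Sum.inr i))
    rw [hdecomp i]
    simp only [LinearMap.add_apply, LinearMap.smul_apply]
    rw [h1, h2, smul_smul, ← add_smul]
  -- the eigenvalue functions are linearly independent
  let L : Fin m → ({χ // W χ ≠ ⊥} → ℂ) :=
    fun i σ => σ.1 (Sum.inl i) + Complex.I * σ.1 (Sum.inr i)
  have hL : LinearIndependent ℂ L := by
    rw [Fintype.linearIndependent_iff]
    intro g hg i0
    -- the combination matrix is zero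
    have hB : (∑ i, g i • T i) = 0 := by
      have hle : (⊤ : Submodule ℂ E) ≤ LinearMap.ker (∑ i, g i • T i) := by
        rw [← htop]
        apply iSup_le
        intro χ
        by_cases hχ : W χ = ⊥
        · rw [hχ]
          exact bot_le
        · intro v hv
          rw [LinearMap.mem_ker, LinearMap.sum_apply]
          have hv' : v ∈ W χ := hv
          have : ∀ i, (g i • T i) v = (g i * (χ (Sum.inl i) + Complex.I * χ (Sum.inr i))) • v := by
            intro i
            rw [LinearMap.smul_apply, heig χ i v hv', smul_smul]
          rw [Finset.sum_congr rfl (fun i _ => this i), ← Finset.sum_smul]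
          have hgev := congrFun hg ⟨χ, hχ⟩
          simp only [Finset.sum_apply, Pi.smul_apply, Pi.zero_apply, smul_eq_mul] at hgev
          simp only [L] at hgev
          rw [hgev, zero_smul]
      apply LinearMap.ext
      intro v
      simpa using LinearMap.mem_ker.mp (hle (Submodule.mem_top : v ∈ ⊤))
    have hBA : (∑ i, g i • A i) = 0 := by
      apply Matrix.toEuclideanLin.injective
      rw [map_sum, map_zero]
      simpa [map_smul] using hB
    -- use orthogonality
    have h0 : ((A i0).conjTranspose * (∑ i, g i • A i)).trace = 0 := by
      rw [hBA, Matrix.mul_zero, Matrix.trace_zero]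
    rw [Matrix.mul_sum, Matrix.trace_sum] at h0
    have hterm : ∀ i ∈ Finset.univ, i ≠ i0 →
        ((A i0).conjTranspose * (g i • A i)).trace = 0 := by
      intro i _ hi
      rw [Matrix.mul_smul, Matrix.trace_smul, horth i0 i (Ne.symm hi), smul_zero]
    rw [← Finset.add_sum_erase _ _ (Finset.mem_univ i0)] at h0
    rw [Finset.sum_eq_zero (fun i hi => hterm i (Finset.mem_of_mem_erase hi)
      (Finset.ne_of_mem_erase hi))] at h0
    rw [add_zero, Matrix.mul_smul, Matrix.trace_smul, smul_eq_mul] at h0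
    exact (mul_eq_zero.mp h0).resolve_right
      (trace_conjTranspose_mul_self_ne_zero (A i0) (hne i0))
  calc m = Fintype.card (Fin m) := (Fintype.card_fin m).symm
    _ ≤ Module.finrank ℂ ({χ // W χ ≠ ⊥} → ℂ) := hL.fintype_card_le_finrank
    _ = Fintype.card {χ // W χ ≠ ⊥} := Module.finrank_pi ℂ
    _ ≤ Module.finrank ℂ E := hcard
    _ = n := finrank_euclideanSpace_fin
end

section
/- Let n ≥ 1 and m ≥ 1, let B_1, …, B_m be orthonormal bases of ℂ^n that are pairwise mutually unbiased, with B_j = {ψ_1^j, …, ψ_n^j}, and let v_1, …, v_n be an orthonormal basis of ℂ^n with v_1 = (1/√n)·(1, …, 1), writing v_t = (v_{t1}, …, v_{tn}). For 1 ≤ j ≤ m and 1 ≤ t ≤ n define the n×n matrix U_{jt} = Σ_{i=1}^n v_{ti} · ψ_i^j (ψ_i^j)†, where ψ(ψ)† denotes the rank-one matrix with entries ψ_a·conj(ψ_b). Then: (1) each U_{jt} is normal; (2) for each fixed j, U_{js} U_{jt} = U_{jt} U_{js} for all s, t; (3) U_{j1} = (1/√n)·I_n for every j; and (4) tr(U_{js}†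 U_{kt}) = 0 whenever (j, s) ≠ (k, t) and not both s = 1 and t = 1. -/
open scoped BigOperators ComplexConjugate

/-- The rank-one projection onto the `i`-th vector of `A`. -/
def Pm (n : ℕ) (A : Fin n → Fin n → ℂ) (i : Fin n) : Matrix (Fin n) (Fin n) ℂ :=
  Matrix.of fun a b => A i a * conj (A i b)

lemma Pm_herm (n : ℕ) (A : Fin n → Fin n → ℂ) (i : Fin n) :
    (Pm n A i).conjTranspose = Pm n A i := by
  ext a b
  simp [Pm, Matrix.conjTranspose_apply, mul_comm]

lemma Pm_mul (n : ℕ) (A : Fin n → Fin n → ℂ) (hA : IsONB n A) (i k : Fin n) :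
    Pm n A i * Pm n A k = (if i = k then (1:ℂ) else 0) • Pm n A i := by
  ext a b
  simp only [Matrix.mul_apply, Pm, Matrix.of_apply, Matrix.smul_apply, smul_eq_mul]
  have h1 : ∑ c, A i a * conj (A i c) * (A k c * conj (A k b))
      = (A i a * conj (A k b)) * ∑ c, A k c * conj (A i c) := by
    rw [Finset.mul_sum]
    exact Finset.sum_congr rfl fun c _ => by ring
  rw [h1, hA k i]
  by_cases h : i = k
  · subst h; simp [mul_comm]
  · simp [h, Ne.symm h]

lemma Pm_sum_smul_mul (n : ℕ) (A C : Fin n → Fin n → ℂ) (c d : Fin n → ℂ) :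
    (∑ i, c i • Pm n A i) * (∑ i, d i • Pm n C i)
      = ∑ i, ∑ i', (c i * d i') • (Pm n A i * Pm n C i') := by
  rw [Finset.sum_mul]
  refine Finset.sum_congr rfl fun i _ => ?_
  rw [Finset.mul_sum]
  refine Finset.sum_congr rfl fun i' _ => ?_
  rw [smul_mul_assoc, mul_smul_comm, smul_smul]

lemma Pm_collapse (n : ℕ) (A : Fin n → Fin n → ℂ) (hA : IsONB n A) (c d : Fin n → ℂ) :
    (∑ i, c i • Pm n A i) * (∑ i, d i • Pm n A i) = ∑ i, (c i * d i) • Pm n A i := by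
  rw [Pm_sum_smul_mul]
  refine Finset.sum_congr rfl fun i _ => ?_
  have : ∀ i' : Fin n, (c i * d i') • (Pm n A i * Pm n A i')
      = if i = i' then (c i * d i') • Pm n A i else 0 := by
    intro i'
    rw [Pm_mul n A hA]
    by_cases h : i = i' <;> simp [h]
  simp only [this]
  simp

lemma ONB_complete (n : ℕ) (A : Fin n → Fin n → ℂ) (hA : IsONB n A) (a b : Fin n) :
    (∑ i, A i a * conj (A i b)) = if a = b then 1 else 0 := by
  set M : Matrix (Fin n) (Fin n) ℂ := Matrix.of A with hM
  have h1 : M * M.conjTranspose = 1 := by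
    ext j k
    simp only [Matrix.mul_apply, Matrix.conjTranspose_apply, Matrix.one_apply, hM,
      Matrix.of_apply]
    simpa using hA j k
  have h2 : M.conjTranspose * M = 1 := mul_eq_one_comm.mp h1
  have h3 : (M.conjTranspose * M) b a = (1 : Matrix (Fin n) (Fin n) ℂ) b a := by rw [h2]
  simp only [Matrix.mul_apply, Matrix.conjTranspose_apply, Matrix.one_apply, hM,
    Matrix.of_apply] at h3
  rw [show ((if a = b then 1 else 0 : ℂ)) = (if b = a then 1 else 0 : ℂ) by
    simp [eq_comm]]
  rw [← h3]
  refine Finset.sum_congr rfl fun i _ => ?_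
  simp [mul_comm]

lemma Pm_trace (n : ℕ) (A C : Fin n → Fin n → ℂ) (i i' : Fin n) :
    (Pm n A i * Pm n C i').trace
      = (∑ a, A i a * conj (C i' a)) * conj (∑ a, A i a * conj (C i' a)) := by
  rw [map_sum, Finset.sum_mul_sum]
  simp only [Matrix.trace, Matrix.diag, Matrix.mul_apply, Pm, Matrix.of_apply]
  refine Finset.sum_congr rfl fun a _ => Finset.sum_congr rfl fun c _ => ?_
  simp only [map_mul, Complex.conj_conj, RingHomCompTriple.comp_apply, RingHom.id_apply]
  ring

theorem commuting_classes_from_MUBs (n m : ℕ) (hn : 0 < n) (hm : 1 ≤ m)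
    (B : Fin m → Fin n → Fin n → ℂ)
    (hONB : ∀ j, IsONB n (B j))
    (hMUB : ∀ j k, j ≠ k → IsMUBPair n (B j) (B k))
    (v : Fin n → Fin n → ℂ)
    (hv : ∀ t s : Fin n, (∑ i, v t i * conj (v s i)) = if t = s then 1 else 0)
    (hv1 : ∀ i, v ⟨0, hn⟩ i = ((Real.sqrt n)⁻¹ : ℂ))
    (U : Fin m → Fin n → Matrix (Fin n) (Fin n) ℂ)
    (hU : ∀ j t, U j t = ∑ i, v t i • Matrix.of (fun a b => B j i a * conj (B j i b))) :
    (∀ j t, U j t * (U j t).conjTranspose = (U j t).conjTranspose * U j t) ∧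
    (∀ j s t, U j s * U j t = U j t * U j s) ∧
    (∀ j, U j ⟨0, hn⟩ = (((Real.sqrt n)⁻¹ : ℝ) : ℂ) • (1 : Matrix (Fin n) (Fin n) ℂ)) ∧
    (∀ j s k t, (j, s) ≠ (k, t) → ¬(s.val = 0 ∧ t.val = 0) →
      ((U j s).conjTranspose * U k t).trace = 0) := by
  have hU' : ∀ j t, U j t = ∑ i, v t i • Pm n (B j) i := hU
  have hUc : ∀ j t, (U j t).conjTranspose = ∑ i, conj (v t i) • Pm n (B j) i := by
    intro j t
    rw [hU' j t, Matrix.conjTranspose_sum]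
    refine Finset.sum_congr rfl fun i _ => ?_
    rw [Matrix.conjTranspose_smul, Pm_herm]
    rfl
  refine ⟨?_, ?_, ?_, ?_⟩
  · intro j t
    rw [hUc j t, hU' j t, Pm_collapse n (B j) (hONB j), Pm_collapse n (B j) (hONB j)]
    exact Finset.sum_congr rfl fun i _ => by rw [mul_comm]
  · intro j s t
    rw [hU' j s, hU' j t, Pm_collapse n (B j) (hONB j), Pm_collapse n (B j) (hONB j)]
    exact Finset.sum_congr rfl fun i _ => by rw [mul_comm]
  · intro j
    rw [hU' j ⟨0, hn⟩]
    have : ∑ i, Pm n (B j) i = 1 := by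
      ext a b
      simp only [Matrix.sum_apply, Pm, Matrix.of_apply, Matrix.one_apply]
      exact ONB_complete n (B j) (hONB j) a b
    simp only [hv1]
    rw [← Finset.smul_sum, this]
    norm_cast
  · intro j s k t hne hz
    have hsum0 : ∀ r : Fin n, r ≠ ⟨0, hn⟩ → ∑ i, v r i = 0 := by
      intro r hr
      have h := hv r ⟨0, hn⟩
      rw [if_neg hr] at h
      simp only [hv1] at h
      have hs : (∑ i, v r i) * conj (((Real.sqrt n : ℂ))⁻¹) = 0 := by
        rw [Finset.sum_mul] at *
        exact h
      have hne' : conj (((Real.sqrt n : ℂ))⁻¹) ≠ 0 := by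
        simp only [map_inv₀, Complex.conj_ofReal, ne_eq, inv_eq_zero, Complex.ofReal_eq_zero]
        positivity
      exact (mul_eq_zero.mp hs).resolve_right hne'
    rw [hUc j s, hU' k t, Pm_sum_smul_mul]
    rw [Matrix.trace_sum]
    simp only [Matrix.trace_sum, Matrix.trace_smul, smul_eq_mul, Pm_trace]
    by_cases hjk : j = k
    · subst hjk
      have hst : s ≠ t := by
        intro h; exact hne (by rw [h])
      have hterm : ∀ i i' : Fin n,
          conj (v s i) * v t i' *
            ((∑ a, B j i a * conj (B j i' a)) * conj (∑ a, B j i a * conj (B j i' a)))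
          = if i = i' then conj (v s i) * v t i' else 0 := by
        intro i i'
        rw [hONB j i i']
        by_cases h : i = i' <;> simp [h]
      simp only [hterm]
      simp only [Finset.sum_ite_eq, Finset.mem_univ, if_true]
      have := hv t s
      rw [if_neg (Ne.symm hst)] at this
      rw [← this]
      exact Finset.sum_congr rfl fun i _ => by ring
    · have hw : ∀ i i' : Fin n,
          (∑ a, B j i a * conj (B k i' a)) * conj (∑ a, B j i a * conj (B k i' a))
            = ((n : ℂ))⁻¹ := by
        intro i i'
        have habs := hMUB j k hjk i i'
        rw [Complex.mul_conj]
        have hnsq : Complex.normSq (∑ a, B j i a * conj (B k i' a)) = (n : ℝ)⁻¹ := by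
          rw [← Complex.sq_norm, habs]
          rw [div_pow, one_pow, Real.sq_sqrt (Nat.cast_nonneg n)]
          rw [one_div]
        rw [hnsq]
        push_cast
        ring
      simp only [hw]
      rcases not_and_or.mp hz with hs | ht
      · have hs0 : ∑ i, conj (v s i) = 0 := by
          rw [← map_sum]
          rw [hsum0 s (by intro h; exact hs (by rw [h]))]
          simp
        calc ∑ i, ∑ i', conj (v s i) * v t i' * ((n : ℂ))⁻¹
            = ∑ i, conj (v s i) * ((∑ i', v t i') * ((n : ℂ))⁻¹) := by
              refine Finset.sum_congr rfl fun i _ => ?_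
              simp only [Finset.mul_sum, Finset.sum_mul]
              exact Finset.sum_congr rfl fun i' _ => by ring
          _ = (∑ i, conj (v s i)) * ((∑ i', v t i') * ((n : ℂ))⁻¹) := by
              simp only [Finset.mul_sum, Finset.sum_mul]
              rw [Finset.sum_comm]
          _ = 0 := by rw [hs0, zero_mul]
      · have ht0 : ∑ i', v t i' = 0 := hsum0 t (by intro h; exact ht (by rw [h]))
        calc ∑ i, ∑ i', conj (v s i) * v t i' * ((n : ℂ))⁻¹
            = ∑ i, conj (v s i) * ((∑ i', v t i') * ((n : ℂ))⁻¹) := by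
              refine Finset.sum_congr rfl fun i _ => ?_
              simp only [Finset.mul_sum, Finset.sum_mul]
              exact Finset.sum_congr rfl fun i' _ => by ring
          _ = 0 := by rw [ht0, zero_mul]; simp
end
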